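/- Let Δ be a monotone NNF formula. Then the recursive function rob defined by rob(true) = ∞, rob(false) = 0, rob(literal) = 1, rob(α ∧ β) = min(rob(α), rob(β)), rob(α ∨ β) = rob(α) + rob(β), when Δ is additionally or-decomposable, satisfies: rob(Δ) ≥ k if and only if Δ has no implicate (clause entailed by Δ built from literals appearing in Δ) mentioning fewer than k variables; in particular, if Δ is or-decomposable and σ is a clause over the literals of Δ with Δ ⊨ σ and σ not valid, then σ mentions at least rob(Δ) variables. -/

import Mathlib

/-- NNF formulas over discrete variables `V` with state spaces `S v`. -/
inductive NNF (V : Type) (S : V → Type) : Type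
  | tru : NNF V S
  | fls : NNF V S
  | lit : (X : V) → Set (S X) → NNF V S
  | conj : NNF V S → NNF V S → NNF V S
  | disj : NNF V S → NNF V S → NNF V S

namespace NNF

variable {V : Type} {S : V → Type}

def sat : NNF V S → (∀ v, S v) → Prop
  | tru, _ => True
  | fls, _ => False
  | lit X s, w => w X ∈ s
  | conj a b, w => a.sat w ∧ b.sat w
  | disj a b, w => a.sat w ∨ b.sat w

def vars : NNF V S → Set V
  | tru => ∅
  | fls => ∅
  | lit X _ => {X}
  | conj a b => a.vars ∪ b.vars
  | disj a b => a.vars ∪ b.vars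

def lits : NNF V S → Set (Σ X : V, Set (S X))
  | tru => ∅
  | fls => ∅
  | lit X s => {⟨X, s⟩}
  | conj a b => a.lits ∪ b.lits
  | disj a b => a.lits ∪ b.lits

/-- Monotone: for each variable `X`, all `X`-literals appearing are simple
(single-state) and equal to each other. -/
def IsMonotone (Δ : NNF V S) : Prop :=
  ∀ (X : V) (s : Set (S X)), (⟨X, s⟩ : Σ X : V, Set (S X)) ∈ Δ.lits →
    (∃ a : S X, s = {a}) ∧ ∀ s' : Set (S X), (⟨X, s'⟩ : Σ X : V, Set (S X)) ∈ Δ.lits → s' = s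

/-- Or-decomposable: the disjuncts of every disjunction share no variables. -/
def IsDecomposable : NNF V S → Prop
  | tru => True
  | fls => True
  | lit _ _ => True
  | conj a b => a.IsDecomposable ∧ b.IsDecomposable
  | disj a b => a.IsDecomposable ∧ b.IsDecomposable ∧ a.vars ∩ b.vars = ∅

/-- `rob(true) = ∞`, `rob(false) = 0`, `rob(literal) = 1`,
`rob(α ∧ β) = min(rob α, rob β)`, `rob(α ∨ β) = rob α + rob β`. -/
noncomputable def rob : NNF V S → ℕ∞
  | tru => ⊤
  | fls => 0
  | lit _ _ => 1
  | conj a b => min a.rob b.rob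
  | disj a b => a.rob + b.rob

lemma vars_finite : ∀ φ : NNF V S, φ.vars.Finite
  | tru => Set.finite_empty
  | fls => Set.finite_empty
  | lit _ _ => Set.finite_singleton _
  | conj a b => (vars_finite a).union (vars_finite b)
  | disj a b => (vars_finite a).union (vars_finite b)

lemma mem_vars_iff : ∀ (φ : NNF V S) (v : V),
    v ∈ φ.vars ↔ ∃ s, (⟨v, s⟩ : Σ X : V, Set (S X)) ∈ φ.lits := by
  intro φ
  induction φ with
  | tru => simp [vars, lits]
  | fls => simp [vars, lits]
  | lit X s =>
    intro v
    constructor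
    · intro hv
      simp only [vars, Set.mem_singleton_iff] at hv
      subst hv
      exact ⟨s, rfl⟩
    · rintro ⟨s', hs'⟩
      simp only [lits, Set.mem_singleton_iff, Sigma.mk.inj_iff] at hs'
      simp [vars, hs'.1]
  | conj a b iha ihb =>
    intro v
    simp only [vars, lits, Set.mem_union, iha, ihb]
    constructor
    · rintro (⟨s, hs⟩ | ⟨s, hs⟩) <;> exact ⟨s, by tauto⟩
    · rintro ⟨s, hs | hs⟩
      · exact Or.inl ⟨s, hs⟩
      · exact Or.inr ⟨s, hs⟩
  | disj a b iha ihb =>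
    intro v
    simp only [vars, lits, Set.mem_union, iha, ihb]
    constructor
    · rintro (⟨s, hs⟩ | ⟨s, hs⟩) <;> exact ⟨s, by tauto⟩
    · rintro ⟨s, hs | hs⟩
      · exact Or.inl ⟨s, hs⟩
      · exact Or.inr ⟨s, hs⟩

lemma sat_congr {w w' : ∀ v, S v} :
    ∀ φ : NNF V S, (∀ v ∈ φ.vars, w v = w' v) → φ.sat w → φ.sat w' := by
  intro φ
  induction φ with
  | tru => intro _ _; trivial
  | fls => intro _ h; exact h.elim
  | lit X s =>
    intro h hw
    have := h X (by simp [vars])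
    simpa [sat, ← this] using hw
  | conj a b iha ihb =>
    intro h hw
    exact ⟨iha (fun v hv => h v (Or.inl hv)) hw.1, ihb (fun v hv => h v (Or.inr hv)) hw.2⟩
  | disj a b iha ihb =>
    intro h hw
    rcases hw with hw | hw
    · exact Or.inl (iha (fun v hv => h v (Or.inl hv)) hw)
    · exact Or.inr (ihb (fun v hv => h v (Or.inr hv)) hw)

lemma sat_mono {w w' : ∀ v, S v} :
    ∀ φ : NNF V S,
    (∀ (v : V) (s : Set (S v)), (⟨v, s⟩ : Σ X : V, Set (S X)) ∈ φ.lits → w v ∈ s → w' v ∈ s) →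
    φ.sat w → φ.sat w' := by
  intro φ
  induction φ with
  | tru => intro _ _; trivial
  | fls => intro _ h; exact h.elim
  | lit X s => intro h hw; exact h X s rfl hw
  | conj a b iha ihb =>
    intro h hw
    exact ⟨iha (fun v s hs => h v s (Or.inl hs)) hw.1, ihb (fun v s hs => h v s (Or.inr hs)) hw.2⟩
  | disj a b iha ihb =>
    intro h hw
    rcases hw with hw | hw
    · exact Or.inl (iha (fun v s hs => h v s (Or.inl hs)) hw)
    · exact Or.inr (ihb (fun v s hs => h v s (Or.inr hs)) hw)

end NNF

/-- A clause over discrete variables, as an assignment of a (possibly empty) set of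
states to each variable. -/
def Clause (V : Type) (S : V → Type) : Type := ∀ v, Set (S v)

def csat {V : Type} {S : V → Type} (c : Clause V S) (w : ∀ v, S v) : Prop := ∃ v, w v ∈ c v

def cvars {V : Type} {S : V → Type} (c : Clause V S) : Set V := {v | c v ≠ ∅}

def cvalid {V : Type} {S : V → Type} (c : Clause V S) : Prop := ∀ w : ∀ v, S v, csat c w

/-- An implicate of `Δ`: a non-valid clause entailed by `Δ`. -/
def Implicate {V : Type} {S : V → Type} (Δ : NNF V S) (c : Clause V S) : Prop :=
  ¬ cvalid c ∧ ∀ w : ∀ v, S v, Δ.sat w → csat c w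

section Aux

variable {V : Type} {S : V → Type} [∀ v, Nonempty (S v)]

open Classical in
/-- Restriction of an entailed clause to the variables of a subformula. -/
lemma restrict_clause {Δ φ : NNF V S}
    (hwf : ∀ p : Σ X : V, Set (S X), p ∈ Δ.lits → p.2 ≠ ∅ ∧ p.2 ≠ Set.univ)
    (hmono : Δ.IsMonotone) (hsub : φ.lits ⊆ Δ.lits)
    (c : Clause V S) (hc : ∀ v : V, c v ≠ ∅ → (⟨v, c v⟩ : Σ X : V, Set (S X)) ∈ Δ.lits)
    (hent : ∀ w, φ.sat w → csat c w) :
    ∃ c' : Clause V S,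
      (∀ v : V, c' v ≠ ∅ → (⟨v, c' v⟩ : Σ X : V, Set (S X)) ∈ φ.lits) ∧
      (∀ w, φ.sat w → csat c' w) ∧ (∀ v, c' v ⊆ c v) ∧ cvars c' ⊆ cvars c ∩ φ.vars := by
  classical
  refine ⟨fun v => if v ∈ φ.vars then c v else ∅, ?_, ?_, ?_, ?_⟩
  · intro v hv
    by_cases hmem : v ∈ φ.vars
    · simp only [if_pos hmem] at hv ⊢
      obtain ⟨s, hs⟩ := (NNF.mem_vars_iff φ v).1 hmem
      have h1 : (⟨v, c v⟩ : Σ X : V, Set (S X)) ∈ Δ.lits := hc v hv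
      have h2 := (hmono v (c v) h1).2 s (hsub hs)
      rwa [← h2]
    · simp [if_neg hmem] at hv
  · intro w hw
    -- g v : a state avoiding c v when possible
    set g : ∀ v, S v := fun v =>
      if h : ((c v)ᶜ).Nonempty then h.choose else Classical.arbitrary (S v) with hg
    have hgprop : ∀ v, c v ≠ Set.univ → g v ∉ c v := by
      intro v hv
      have hne : ((c v)ᶜ).Nonempty := by
        rw [Set.nonempty_compl]; exact hv
      simp only [hg, dif_pos hne]
      exact hne.choose_spec
    set w' : ∀ v, S v := fun v => if v ∈ φ.vars then w v else g v with hw'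
    have hsatw' : φ.sat w' := by
      refine NNF.sat_congr φ (fun v hv => ?_) hw
      simp [hw', if_pos hv]
    obtain ⟨v, hv⟩ := hent w' hsatw'
    by_cases hmem : v ∈ φ.vars
    · refine ⟨v, ?_⟩
      simp only [if_pos hmem]
      simpa [hw', if_pos hmem] using hv
    · exfalso
      simp only [hw', if_neg hmem] at hv
      have hne : c v ≠ ∅ := fun h => by simp [h] at hv
      exact hgprop v (hwf ⟨v, c v⟩ (hc v hne)).2 hv
  · intro v
    by_cases hmem : v ∈ φ.vars <;> simp [hmem]
  · intro v hv
    simp only [cvars, Set.mem_setOf_eq] at hv ⊢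
    by_cases hmem : v ∈ φ.vars
    · simp only [if_pos hmem] at hv
      exact ⟨hv, hmem⟩
    · simp [if_neg hmem] at hv

end Aux

section Lower

variable {V : Type} {S : V → Type} [∀ v, Nonempty (S v)]

lemma cvars_finite {Δ : NNF V S} {c : Clause V S}
    (hc : ∀ v : V, c v ≠ ∅ → (⟨v, c v⟩ : Σ X : V, Set (S X)) ∈ Δ.lits) :
    (cvars c).Finite := by
  refine (NNF.vars_finite Δ).subset (fun v hv => ?_)
  exact (NNF.mem_vars_iff Δ v).2 ⟨c v, hc v hv⟩

lemma lowerAux {Δ : NNF V S}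
    (hwf : ∀ p : Σ X : V, Set (S X), p ∈ Δ.lits → p.2 ≠ ∅ ∧ p.2 ≠ Set.univ)
    (hmono : Δ.IsMonotone) :
    ∀ φ : NNF V S, φ.lits ⊆ Δ.lits → φ.IsDecomposable →
    ∀ c : Clause V S, (∀ v : V, c v ≠ ∅ → (⟨v, c v⟩ : Σ X : V, Set (S X)) ∈ Δ.lits) →
    (∀ w, φ.sat w → csat c w) → ¬ cvalid c →
    φ.rob ≤ ((cvars c).ncard : ℕ∞) := by
  intro φ
  induction φ with
  | tru =>
    intro _ _ c _ hent hnv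
    exact absurd (fun w => hent w trivial) hnv
  | fls =>
    intro _ _ c _ _ _
    exact zero_le
  | lit X s =>
    intro hsub _ c hc hent hnv
    have hsX : (⟨X, s⟩ : Σ X : V, Set (S X)) ∈ Δ.lits := hsub rfl
    obtain ⟨a, ha⟩ := Set.nonempty_iff_ne_empty.2 (hwf _ hsX).1
    classical
    set w : ∀ v, S v := Function.update (fun v => Classical.arbitrary (S v)) X a with hw
    have hsat : (NNF.lit X s).sat w := by
      show w X ∈ s
      simp [hw, Function.update_self, ha]
    obtain ⟨v, hv⟩ := hent w hsat
    have hvne : c v ≠ ∅ := fun h => by simp [h] at hv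
    have hfin : (cvars c).Finite := cvars_finite hc
    have hpos : 0 < (cvars c).ncard := (Set.ncard_pos hfin).2 ⟨v, hvne⟩
    show (NNF.lit X s).rob ≤ _
    show (1 : ℕ∞) ≤ _
    exact_mod_cast hpos
  | conj a b iha ihb =>
    intro hsub hdec c hc hent hnv
    have hsuba : a.lits ⊆ Δ.lits := fun p hp => hsub (Or.inl hp)
    have hsubb : b.lits ⊆ Δ.lits := fun p hp => hsub (Or.inr hp)
    have key : (∀ w, a.sat w → csat c w) ∨ (∀ w, b.sat w → csat c w) := by
      by_contra h
      push_neg at h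
      obtain ⟨⟨w1, hw1, hnc1⟩, ⟨w2, hw2, hnc2⟩⟩ := h
      classical
      set w : ∀ v, S v := fun v =>
        if ∃ s : Set (S v), (⟨v, s⟩ : Σ X : V, Set (S X)) ∈ Δ.lits ∧ w2 v ∈ s
        then w2 v else w1 v with hwdef
      have hmono1 : ∀ (v : V) (s : Set (S v)),
          (⟨v, s⟩ : Σ X : V, Set (S X)) ∈ Δ.lits → w1 v ∈ s → w v ∈ s := by
        intro v s hs h1
        by_cases hcond : ∃ s' : Set (S v), (⟨v, s'⟩ : Σ X : V, Set (S X)) ∈ Δ.lits ∧ w2 v ∈ s'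
        · obtain ⟨s', hs', h2⟩ := hcond
          have : s' = s := (hmono v s hs).2 s' hs'
          subst this
          simp only [hwdef, if_pos (⟨s', hs', h2⟩ :
            ∃ s'' : Set (S v), (⟨v, s''⟩ : Σ X : V, Set (S X)) ∈ Δ.lits ∧ w2 v ∈ s'')]
          exact h2
        · simp only [hwdef, if_neg hcond]
          exact h1
      have hmono2 : ∀ (v : V) (s : Set (S v)),
          (⟨v, s⟩ : Σ X : V, Set (S X)) ∈ Δ.lits → w2 v ∈ s → w v ∈ s := by
        intro v s hs h2
        have hcond : ∃ s' : Set (S v), (⟨v, s'⟩ : Σ X : V, Set (S X)) ∈ Δ.lits ∧ w2 v ∈ s' :=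
          ⟨s, hs, h2⟩
        simp only [hwdef, if_pos hcond]
        exact h2
      have hwa : a.sat w := NNF.sat_mono a (fun v s hs => hmono1 v s (hsuba hs)) hw1
      have hwb : b.sat w := NNF.sat_mono b (fun v s hs => hmono2 v s (hsubb hs)) hw2
      obtain ⟨v, hv⟩ := hent w ⟨hwa, hwb⟩
      have hvne : c v ≠ ∅ := fun h => by simp [h] at hv
      have hcl : (⟨v, c v⟩ : Σ X : V, Set (S X)) ∈ Δ.lits := hc v hvne
      by_cases hcond : ∃ s' : Set (S v), (⟨v, s'⟩ : Σ X : V, Set (S X)) ∈ Δ.lits ∧ w2 v ∈ s'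
      · simp only [hwdef, if_pos hcond] at hv
        exact hnc2 ⟨v, hv⟩
      · simp only [hwdef, if_neg hcond] at hv
        exact hnc1 ⟨v, hv⟩
    show min a.rob b.rob ≤ _
    rcases key with h | h
    · exact le_trans (min_le_left _ _) (iha hsuba hdec.1 c hc h hnv)
    · exact le_trans (min_le_right _ _) (ihb hsubb hdec.2 c hc h hnv)
  | disj a b iha ihb =>
    intro hsub hdec c hc hent hnv
    have hsuba : a.lits ⊆ Δ.lits := fun p hp => hsub (Or.inl hp)
    have hsubb : b.lits ⊆ Δ.lits := fun p hp => hsub (Or.inr hp)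
    have henta : ∀ w, a.sat w → csat c w := fun w hw => hent w (Or.inl hw)
    have hentb : ∀ w, b.sat w → csat c w := fun w hw => hent w (Or.inr hw)
    obtain ⟨ca, hca, henta', hsuba', hvarsa⟩ :=
      restrict_clause hwf hmono hsuba c hc henta
    obtain ⟨cb, hcb, hentb', hsubb', hvarsb⟩ :=
      restrict_clause hwf hmono hsubb c hc hentb
    have hca' : ∀ v : V, ca v ≠ ∅ → (⟨v, ca v⟩ : Σ X : V, Set (S X)) ∈ Δ.lits :=
      fun v hv => hsuba (hca v hv)
    have hcb' : ∀ v : V, cb v ≠ ∅ → (⟨v, cb v⟩ : Σ X : V, Set (S X)) ∈ Δ.lits :=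
      fun v hv => hsubb (hcb v hv)
    have hnva : ¬ cvalid ca := by
      intro h
      refine hnv (fun w => ?_)
      obtain ⟨v, hv⟩ := h w
      exact ⟨v, hsuba' v hv⟩
    have hnvb : ¬ cvalid cb := by
      intro h
      refine hnv (fun w => ?_)
      obtain ⟨v, hv⟩ := h w
      exact ⟨v, hsubb' v hv⟩
    have ha := iha hsuba hdec.1 ca hca' henta' hnva
    have hb := ihb hsubb hdec.2.1 cb hcb' hentb' hnvb
    have hdisj : Disjoint (cvars ca) (cvars cb) := by
      refine Set.disjoint_left.2 (fun v hva hvb => ?_)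
      have h1 : v ∈ a.vars := (hvarsa hva).2
      have h2 : v ∈ b.vars := (hvarsb hvb).2
      have := hdec.2.2
      have : v ∈ a.vars ∩ b.vars := ⟨h1, h2⟩
      rw [hdec.2.2] at this
      exact this
    have hfin : (cvars c).Finite := cvars_finite hc
    have hfina : (cvars ca).Finite := hfin.subset (fun v hv => (hvarsa hv).1)
    have hfinb : (cvars cb).Finite := hfin.subset (fun v hv => (hvarsb hv).1)
    have hunion : (cvars ca).ncard + (cvars cb).ncard ≤ (cvars c).ncard := by
      rw [← Set.ncard_union_eq hdisj hfina hfinb]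
      refine Set.ncard_le_ncard ?_ hfin
      exact Set.union_subset (fun v hv => (hvarsa hv).1) (fun v hv => (hvarsb hv).1)
    show a.rob + b.rob ≤ _
    calc a.rob + b.rob ≤ ((cvars ca).ncard : ℕ∞) + ((cvars cb).ncard : ℕ∞) :=
          add_le_add ha hb
      _ = (((cvars ca).ncard + (cvars cb).ncard : ℕ) : ℕ∞) := by push_cast; ring
      _ ≤ ((cvars c).ncard : ℕ∞) := by exact_mod_cast hunion

end Lower

section Upper

variable {V : Type} {S : V → Type} [∀ v, Nonempty (S v)]

lemma existsImp :
    ∀ φ : NNF V S,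
    (∀ p : Σ X : V, Set (S X), p ∈ φ.lits → p.2 ≠ Set.univ) →
    φ.IsDecomposable → φ.rob ≠ ⊤ →
    ∃ c : Clause V S,
      (∀ v : V, c v ≠ ∅ → (⟨v, c v⟩ : Σ X : V, Set (S X)) ∈ φ.lits) ∧
      (∀ w, φ.sat w → csat c w) ∧ ¬ cvalid c ∧
      ((cvars c).ncard : ℕ∞) ≤ φ.rob := by
  intro φ
  induction φ with
  | tru => intro _ _ h; exact absurd rfl h
  | fls =>
    intro _ _ _
    refine ⟨fun v => ∅, fun v hv => absurd rfl hv, fun w hw => hw.elim, ?_, ?_⟩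
    · intro h
      obtain ⟨v, hv⟩ := h (fun v => Classical.arbitrary (S v))
      exact hv
    · have : cvars (fun v => (∅ : Set (S v))) = (∅ : Set V) := by
        ext v; simp [cvars]
      rw [this]
      simp
  | lit X s =>
    intro hwf _ _
    classical
    obtain ⟨b, hb⟩ : ∃ b : S X, b ∉ s := by
      have := hwf ⟨X, s⟩ rfl
      by_contra h
      push_neg at h
      exact this (Set.eq_univ_of_forall h)
    set c : Clause V S := Function.update (fun v => (∅ : Set (S v))) X s with hcdef
    have hcX : c X = s := by simp [hcdef]
    have hcne : ∀ v, v ≠ X → c v = ∅ := by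
      intro v hv; simp [hcdef, Function.update_of_ne hv]
    refine ⟨c, ?_, ?_, ?_, ?_⟩
    · intro v hv
      by_cases h : v = X
      · subst h; rw [hcX]; exact rfl
      · exact absurd (hcne v h) hv
    · intro w hw
      exact ⟨X, by rw [hcX]; exact hw⟩
    · intro h
      obtain ⟨v, hv⟩ := h (Function.update (fun v => Classical.arbitrary (S v)) X b)
      by_cases hvX : v = X
      · subst hvX
        rw [hcX] at hv
        simp only [Function.update_self] at hv
        exact hb hv
      · rw [hcne v hvX] at hv; exact hv
    · have hsubX : cvars c ⊆ {X} := by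
        intro v hv
        by_contra h
        exact hv (hcne v h)
      have : (cvars c).ncard ≤ 1 := by
        calc (cvars c).ncard ≤ ({X} : Set V).ncard :=
              Set.ncard_le_ncard hsubX (Set.finite_singleton X)
          _ = 1 := Set.ncard_singleton X
      show _ ≤ (1 : ℕ∞)
      exact_mod_cast this
  | conj a b iha ihb =>
    intro hwf hdec htop
    have hwfa : ∀ p : Σ X : V, Set (S X), p ∈ a.lits → p.2 ≠ Set.univ :=
      fun p hp => hwf p (Or.inl hp)
    have hwfb : ∀ p : Σ X : V, Set (S X), p ∈ b.lits → p.2 ≠ Set.univ :=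
      fun p hp => hwf p (Or.inr hp)
    rcases le_total a.rob b.rob with hle | hle
    · have hmin : (NNF.conj a b).rob = a.rob := min_eq_left hle
      obtain ⟨c, hc, hent, hnv, hcard⟩ := iha hwfa hdec.1 (by rw [← hmin]; exact htop)
      exact ⟨c, fun v hv => Or.inl (hc v hv), fun w hw => hent w hw.1, hnv,
        by rw [hmin]; exact hcard⟩
    · have hmin : (NNF.conj a b).rob = b.rob := min_eq_right hle
      obtain ⟨c, hc, hent, hnv, hcard⟩ := ihb hwfb hdec.2 (by rw [← hmin]; exact htop)
      exact ⟨c, fun v hv => Or.inr (hc v hv), fun w hw => hent w hw.2, hnv,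
        by rw [hmin]; exact hcard⟩
  | disj a b iha ihb =>
    intro hwf hdec htop
    classical
    have hwfa : ∀ p : Σ X : V, Set (S X), p ∈ a.lits → p.2 ≠ Set.univ :=
      fun p hp => hwf p (Or.inl hp)
    have hwfb : ∀ p : Σ X : V, Set (S X), p ∈ b.lits → p.2 ≠ Set.univ :=
      fun p hp => hwf p (Or.inr hp)
    have htopa : a.rob ≠ ⊤ := fun h => htop (by show a.rob + b.rob = ⊤; simp [h])
    have htopb : b.rob ≠ ⊤ := fun h => htop (by show a.rob + b.rob = ⊤; simp [h])
    obtain ⟨ca, hca, henta, hnva, hcarda⟩ := iha hwfa hdec.1 htopa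
    obtain ⟨cb, hcb, hentb, hnvb, hcardb⟩ := ihb hwfb hdec.2.1 htopb
    have hvara : ∀ v, ca v ≠ ∅ → v ∈ a.vars :=
      fun v hv => (NNF.mem_vars_iff a v).2 ⟨ca v, hca v hv⟩
    have hvarb : ∀ v, cb v ≠ ∅ → v ∈ b.vars :=
      fun v hv => (NNF.mem_vars_iff b v).2 ⟨cb v, hcb v hv⟩
    have hexcl : ∀ v, ca v = ∅ ∨ cb v = ∅ := by
      intro v
      by_contra h
      push_neg at h
      have : v ∈ a.vars ∩ b.vars :=
        ⟨hvara v (Set.nonempty_iff_ne_empty.1 h.1), hvarb v (Set.nonempty_iff_ne_empty.1 h.2)⟩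
      rw [hdec.2.2] at this
      exact this
    set c : Clause V S := fun v => ca v ∪ cb v with hcdef
    refine ⟨c, ?_, ?_, ?_, ?_⟩
    · intro v hv
      rcases hexcl v with h | h
      · have : c v = cb v := by simp [hcdef, h]
        rw [this] at hv ⊢
        exact Or.inr (hcb v hv)
      · have : c v = ca v := by simp [hcdef, h]
        rw [this] at hv ⊢
        exact Or.inl (hca v hv)
    · intro w hw
      rcases hw with hw | hw
      · obtain ⟨v, hv⟩ := henta w hw
        exact ⟨v, Or.inl hv⟩
      · obtain ⟨v, hv⟩ := hentb w hw
        exact ⟨v, Or.inr hv⟩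
    · intro h
      obtain ⟨wa, hwa⟩ : ∃ w, ¬ csat ca w := not_forall.1 hnva
      obtain ⟨wb, hwb⟩ : ∃ w, ¬ csat cb w := not_forall.1 hnvb
      simp only [csat, not_exists] at hwa hwb
      obtain ⟨v, hv⟩ := h (fun v => if ca v = ∅ then wb v else wa v)
      by_cases hce : ca v = ∅
      · simp only [if_pos hce] at hv
        rcases hv with hv | hv
        · rw [hce] at hv; exact hv
        · exact hwb v hv
      · simp only [if_neg hce] at hv
        rcases hv with hv | hv
        · exact hwa v hv
        · rcases hexcl v with h' | h'
          · exact hce h'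
          · rw [h'] at hv; exact hv
    · have hcv : cvars c = cvars ca ∪ cvars cb := by
        ext v
        simp only [cvars, Set.mem_setOf_eq, Set.mem_union, hcdef]
        constructor
        · intro h
          by_contra h'
          push_neg at h'
          exact h (by simp [h'.1, h'.2])
        · rintro (h | h) <;> intro he
          · exact h (by simpa using (Set.union_empty_iff.1 he).1)
          · exact h (by simpa using (Set.union_empty_iff.1 he).2)
      have hfina : (cvars ca).Finite := (NNF.vars_finite a).subset hvara
      have hfinb : (cvars cb).Finite := (NNF.vars_finite b).subset hvarb
      have hdisj : Disjoint (cvars ca) (cvars cb) := by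
        refine Set.disjoint_left.2 (fun v hva hvb => ?_)
        have : v ∈ a.vars ∩ b.vars := ⟨hvara v hva, hvarb v hvb⟩
        rw [hdec.2.2] at this
        exact this
      rw [hcv, Set.ncard_union_eq hdisj hfina hfinb]
      show (((cvars ca).ncard + (cvars cb).ncard : ℕ) : ℕ∞) ≤ a.rob + b.rob
      push_cast
      exact add_le_add hcarda hcardb

end Upper


/-- For a monotone NNF `Δ` that is additionally or-decomposable: `rob Δ ≥ k` iff `Δ` has
no implicate built from literals appearing in `Δ` mentioning fewer than `k` variables;
in particular, any non-valid clause over the literals of `Δ` entailed by `Δ` mentions at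
least `rob Δ` variables. -/
theorem stmt17 {V : Type} {S : V → Type} [∀ v, Nonempty (S v)]
    (Δ : NNF V S)
    (hwf : ∀ p : Σ X : V, Set (S X), p ∈ Δ.lits → p.2 ≠ ∅ ∧ p.2 ≠ Set.univ)
    (hmono : Δ.IsMonotone) (hdec : Δ.IsDecomposable) :
    (∀ k : ℕ, (k : ℕ∞) ≤ Δ.rob ↔
      ¬ ∃ c : Clause V S,
        (∀ v : V, c v ≠ ∅ → (⟨v, c v⟩ : Σ X : V, Set (S X)) ∈ Δ.lits) ∧
        Implicate Δ c ∧ (cvars c).ncard < k) ∧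
    (∀ c : Clause V S,
      (∀ v : V, c v ≠ ∅ → (⟨v, c v⟩ : Σ X : V, Set (S X)) ∈ Δ.lits) →
      (∀ w : ∀ v, S v, Δ.sat w → csat c w) → ¬ cvalid c →
      Δ.rob ≤ ((cvars c).ncard : ℕ∞)) := by
  have lower := lowerAux hwf hmono Δ (subset_refl _) hdec
  refine ⟨fun k => ⟨?_, ?_⟩, fun c hc hent hnv => lower c hc hent hnv⟩
  · rintro hk ⟨c, hc, ⟨hnv, hent⟩, hlt⟩
    have h1 : Δ.rob ≤ ((cvars c).ncard : ℕ∞) := lower c hc hent hnv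
    have h2 : ((cvars c).ncard : ℕ∞) < (k : ℕ∞) := by exact_mod_cast hlt
    exact absurd (lt_of_le_of_lt (le_trans hk h1) h2) (lt_irrefl _)
  · intro h
    by_contra hk
    have hlt : Δ.rob < (k : ℕ∞) := lt_of_not_ge hk
    have htop : Δ.rob ≠ ⊤ := ne_top_of_lt hlt
    obtain ⟨c, hc, hent, hnv, hcard⟩ :=
      existsImp Δ (fun p hp => (hwf p hp).2) hdec htop
    refine h ⟨c, hc, ⟨hnv, hent⟩, ?_⟩
    have : ((cvars c).ncard : ℕ∞) < (k : ℕ∞) := lt_of_le_of_lt hcard hlt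
    exact_mod_cast this
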